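/- Let (X,P) be an irreducible transitive reversible Markov chain with reversible measure π. Then for every γ ∈ AUT(X,P) the ratio g(γ) := π(γx)/π(x) does not depend on the choice of x ∈ X, and the resulting function g is an exponential on AUT(X,P), i.e. g(βγ)=g(β)g(γ) for all β,γ ∈ AUT(X,P); consequently the function f(γ) := r(γx,γy)/r(x,y) = 1/g(γ) on resistances is also an exponential. -/

import Mathlib

/- STATEMENT 2: For an irreducible transitive reversible Markov chain (X,P) with
reversible measure π, the ratio g(γ)=π(γx)/π(x) is independent of x for every
automorphism γ of (X,P), g is an exponential (multiplicative) on AUT(X,P), and the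
corresponding ratio of resistances f(γ)=r(γx,γy)/r(x,y)=1/g(γ) is an exponential as well. -/

theorem reversible_transitive_exponential
    {X : Type*} (p : X → X → ℝ) (π : X → ℝ)
    (hp_nonneg : ∀ x y, 0 ≤ p x y)
    (hp_row : ∀ x, HasSum (p x) 1)
    (hπ_pos : ∀ x, 0 < π x)
    (hrev : ∀ x y, π x * p x y = π y * p y x)
    (hirr : ∀ x y : X, Relation.ReflTransGen (fun a b => 0 < p a b) x y)
    (htrans : ∀ x y : X, ∃ γ : X ≃ X, (∀ a b, p (γ a) (γ b) = p a b) ∧ γ x = y) :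
    -- g(γ) := π(γ x)/π(x) does not depend on x
    (∀ γ : X ≃ X, (∀ a b, p (γ a) (γ b) = p a b) →
      ∀ x y : X, π (γ x) / π x = π (γ y) / π y) ∧
    -- g is an exponential on AUT(X,P): g(β∘γ) = g(β) * g(γ)
    (∀ β γ : X ≃ X, (∀ a b, p (β a) (β b) = p a b) → (∀ a b, p (γ a) (γ b) = p a b) →
      ∀ x : X, π (β (γ x)) / π x = (π (β x) / π x) * (π (γ x) / π x)) ∧
    -- f(γ) := r(γx,γy)/r(x,y) = 1/g(γ), where r(x,y) = 1/(π(x) p(x,y)),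
    -- so f is an exponential as well
    (∀ γ : X ≃ X, (∀ a b, p (γ a) (γ b) = p a b) →
      ∀ x y : X, 0 < p x y →
        (1 / (π (γ x) * p (γ x) (γ y))) / (1 / (π x * p x y)) = (π (γ x) / π x)⁻¹) := by
  have key : ∀ γ : X ≃ X, (∀ a b, p (γ a) (γ b) = p a b) →
      ∀ x y : X, π (γ x) / π x = π (γ y) / π y := by
    intro γ hγ x y
    have step : ∀ a b : X, 0 < p a b → π (γ a) / π a = π (γ b) / π b := by
      intro a b hab
      have h1 : π a * p a b = π b * p b a := hrev a b
      have h2 : π (γ a) * p a b = π (γ b) * p b a := by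
        have := hrev (γ a) (γ b); rwa [hγ a b, hγ b a] at this
      have hba : 0 < p b a := by
        by_contra h
        have : p b a = 0 := le_antisymm (not_lt.mp h) (hp_nonneg b a)
        rw [this, mul_zero] at h1
        exact absurd h1 (ne_of_gt (mul_pos (hπ_pos a) hab))
      have hcross : π (γ a) * π b = π (γ b) * π a := by
        have := mul_right_cancel₀ (ne_of_gt hab)
          (show (π (γ a) * π b) * p a b = (π (γ b) * π a) * p a b by
            calc (π (γ a) * π b) * p a b = π b * (π (γ a) * p a b) := by ring
            _ = π b * (π (γ b) * p b a) := by rw [h2]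
            _ = π (γ b) * (π b * p b a) := by ring
            _ = π (γ b) * (π a * p a b) := by rw [← h1]
            _ = (π (γ b) * π a) * p a b := by ring)
        exact this
      rw [div_eq_div_iff (hπ_pos a).ne' (hπ_pos b).ne']
      linarith [hcross]
    induction hirr x y with
    | refl => rfl
    | tail _ hbc ih => exact ih.trans (step _ _ hbc)
  refine ⟨key, ?_, ?_⟩
  · intro β γ hβ hγ x
    have h1 : π (β (γ x)) / π (γ x) = π (β x) / π x := key β hβ (γ x) x
    have hx := hπ_pos x
    have hgx := hπ_pos (γ x)
    calc π (β (γ x)) / π x = (π (β (γ x)) / π (γ x)) * (π (γ x) / π x) := by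
          rw [div_mul_div_comm, mul_comm (π (γ x)) (π x),
            mul_div_mul_right _ _ hgx.ne']
      _ = (π (β x) / π x) * (π (γ x) / π x) := by rw [h1]
  · intro γ hγ x y hxy
    have hpγ : p (γ x) (γ y) = p x y := hγ x y
    have hx := hπ_pos x
    have hgx := hπ_pos (γ x)
    rw [hpγ]
    field_simp
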